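/- A convex lattice polygon P satisfies |P ∩ ℤ²| ≤ (ℓ(P)+1)², where ℓ(P) is the lattice diameter of P (the maximum number of lattice points of P on a single line, minus one). -/

import Mathlib

/-- Embedding of the integer lattice into the real plane. -/
def latticeEmb : ℤ × ℤ → ℝ × ℝ := fun p => ((p.1 : ℝ), (p.2 : ℝ))

/-- A convex lattice polygon of lattice diameter `ℓ` (every line contains at most
`ℓ + 1` of its lattice points) has at most `(ℓ + 1)²` lattice points. -/
theorem card_le_lattice_diameter_sq (S : Finset (ℤ × ℤ)) (P : Set (ℝ × ℝ))
    (hP : P = convexHull ℝ (latticeEmb '' (S : Set (ℤ × ℤ))))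
    (ℓ : ℕ)
    (hdiam : ∀ T : Finset (ℤ × ℤ), (∀ q ∈ T, latticeEmb q ∈ P) →
      Collinear ℝ (latticeEmb '' (T : Set (ℤ × ℤ))) → T.card ≤ ℓ + 1) :
    Set.ncard {q : ℤ × ℤ | latticeEmb q ∈ P} ≤ (ℓ + 1) ^ 2 := by
  classical
  haveI : NeZero (ℓ + 1) := ⟨Nat.succ_ne_zero ℓ⟩
  have hconv : Convex ℝ P := hP ▸ convex_convexHull ℝ _
  set A : Set (ℤ × ℤ) := {q : ℤ × ℤ | latticeEmb q ∈ P} with hA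
  set f : ℤ × ℤ → ZMod (ℓ + 1) × ZMod (ℓ + 1) :=
    fun q => ((q.1 : ZMod (ℓ + 1)), (q.2 : ZMod (ℓ + 1))) with hf
  -- Key claim: `f` is injective on `A`.  If two lattice points of `P` were congruent
  -- mod `ℓ+1`, the segment between them would contain `ℓ+2` collinear lattice points.
  have hinj : Set.InjOn f A := by
    rintro a ha b hb hab
    by_contra hne
    have ha' : latticeEmb a ∈ P := ha
    have hb' : latticeEmb b ∈ P := hb
    have h1 : ((ℓ + 1 : ℕ) : ℤ) ∣ a.1 - b.1 := by
      have h := congrArg Prod.fst hab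
      simp only [hf] at h
      rwa [← sub_eq_zero, ← Int.cast_sub, ZMod.intCast_zmod_eq_zero_iff_dvd] at h
    have h2 : ((ℓ + 1 : ℕ) : ℤ) ∣ a.2 - b.2 := by
      have h := congrArg Prod.snd hab
      simp only [hf] at h
      rwa [← sub_eq_zero, ← Int.cast_sub, ZMod.intCast_zmod_eq_zero_iff_dvd] at h
    obtain ⟨d1, hd1⟩ := h1
    obtain ⟨d2, hd2⟩ := h2
    have hd : d1 ≠ 0 ∨ d2 ≠ 0 := by
      by_contra h
      push_neg at h
      apply hne
      have e1 : a.1 = b.1 := by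
        have : a.1 - b.1 = ((ℓ+1:ℕ):ℤ) * 0 := by rw [hd1, h.1]
        omega
      have e2 : a.2 = b.2 := by
        have : a.2 - b.2 = ((ℓ+1:ℕ):ℤ) * 0 := by rw [hd2, h.2]
        omega
      exact Prod.ext e1 e2
    set g : ℕ → ℤ × ℤ := fun t => (b.1 + (t : ℤ) * d1, b.2 + (t : ℤ) * d2) with hg
    have hginj : Function.Injective g := by
      intro s t h
      simp only [hg, Prod.mk.injEq, add_right_inj] at h
      rcases hd with hd | hd
      · have := mul_right_cancel₀ hd h.1
        exact_mod_cast this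
      · have := mul_right_cancel₀ hd h.2
        exact_mod_cast this
    set T : Finset (ℤ × ℤ) := (Finset.range (ℓ + 2)).image g with hT
    have hcard : T.card = ℓ + 2 := by
      rw [hT, Finset.card_image_of_injective _ hginj, Finset.card_range]
    -- each point of `T` lies on the segment from `latticeEmb b` to `latticeEmb a`
    have hseg : segment ℝ (latticeEmb b) (latticeEmb a) ⊆ P :=
      hconv.segment_subset hb' ha'
    have hnR : ((ℓ : ℝ) + 1) ≠ 0 := by positivity
    have hmemP : ∀ q ∈ T, latticeEmb q ∈ P := by
      intro q hq
      obtain ⟨t, ht, rfl⟩ := Finset.mem_image.mp hq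
      have ht' : (t : ℝ) ≤ (ℓ : ℝ) + 1 := by
        have : t ≤ ℓ + 1 := by
          have := Finset.mem_range.mp ht; omega
        exact_mod_cast this
      apply hseg
      rw [segment_eq_image']
      refine ⟨(t : ℝ) / ((ℓ : ℝ) + 1), ⟨by positivity, ?_⟩, ?_⟩
      · rw [div_le_one (by positivity)]; exact ht'
      · have e1 : (a.1 : ℝ) = (b.1 : ℝ) + ((ℓ : ℝ) + 1) * (d1 : ℝ) := by
          have : (a.1 : ℝ) - (b.1 : ℝ) = ((ℓ : ℝ) + 1) * (d1 : ℝ) := by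
            exact_mod_cast congrArg (fun z : ℤ => (z : ℝ)) hd1
          linarith
        have e2 : (a.2 : ℝ) = (b.2 : ℝ) + ((ℓ : ℝ) + 1) * (d2 : ℝ) := by
          have : (a.2 : ℝ) - (b.2 : ℝ) = ((ℓ : ℝ) + 1) * (d2 : ℝ) := by
            exact_mod_cast congrArg (fun z : ℤ => (z : ℝ)) hd2
          linarith
        apply Prod.ext
        · simp only [latticeEmb, hg, Prod.fst_add, Prod.fst_sub, Prod.smul_fst, smul_eq_mul]
          push_cast
          rw [e1]
          field_simp
          ring
        · simp only [latticeEmb, hg, Prod.snd_add, Prod.snd_sub, Prod.smul_snd, smul_eq_mul]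
          push_cast
          rw [e2]
          field_simp
          ring
    -- the points of `T` are collinear
    have hb0 : latticeEmb b ∈ latticeEmb '' (T : Set (ℤ × ℤ)) := by
      refine ⟨g 0, ?_, ?_⟩
      · simp only [hT, Finset.coe_image, Set.mem_image, Finset.mem_coe]
        exact ⟨0, by simp, rfl⟩
      · simp [hg, latticeEmb]
    have hcol : Collinear ℝ (latticeEmb '' (T : Set (ℤ × ℤ))) := by
      rw [collinear_iff_of_mem hb0]
      refine ⟨((d1 : ℝ), (d2 : ℝ)), ?_⟩
      rintro p ⟨q, hq, rfl⟩
      simp only [hT, Finset.coe_image, Set.mem_image, Finset.mem_coe] at hq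
      obtain ⟨t, _, rfl⟩ := hq
      refine ⟨(t : ℝ), ?_⟩
      apply Prod.ext <;>
        simp [latticeEmb, hg, Prod.smul_fst, Prod.smul_snd] <;> push_cast <;> try ring
    have := hdiam T hmemP hcol
    omega
  have himage : (f '' A).Finite := Set.toFinite _
  have hfin : A.Finite := Set.Finite.of_finite_image himage hinj
  calc A.ncard = (f '' A).ncard := (Set.ncard_image_of_injOn hinj).symm
    _ ≤ (Set.univ : Set (ZMod (ℓ + 1) × ZMod (ℓ + 1))).ncard :=
        Set.ncard_le_ncard (Set.subset_univ _) Set.finite_univ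
    _ = (ℓ + 1) ^ 2 := by
        rw [Set.ncard_univ, Nat.card_prod, Nat.card_zmod]
        ring
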